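/- arXiv:1608.00157 — 2 statements merged into one kernel-verified Lean document; each statement's English description precedes it below -/
import Mathlib

section
/- Let ω = e^{2πi/3} ∈ ℂ and τ = ω + 2. For every natural number k with k ≡ 5 (mod 12) or k ≡ 7 (mod 12), one has |τ^k − 1|² = 1 + 3^k + 3^{(k+1)/2}. -/
open Complex

/-- The primitive cube root of unity `ω = e^{2πi/3}`. -/
noncomputable def ω : ℂ := Complex.exp (2 * Real.pi * Complex.I / 3)

/-- `τ = ω + 2`. -/
noncomputable def τ : ℂ := ω + 2

lemma ns_sub_one (z : ℂ) :
    Complex.normSq (z - 1) = Complex.normSq z - 2 * z.re + 1 := by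
  simp only [Complex.normSq_apply, Complex.sub_re, Complex.sub_im, Complex.one_re,
    Complex.one_im]
  ring

lemma omega_quad : ω ^ 2 + ω + 1 = 0 := by
  have hprim := Complex.isPrimitiveRoot_exp 3 (by norm_num)
  have hω3 : ω ^ 3 = 1 := by
    have := hprim.pow_eq_one
    simpa [ω] using this
  have hωne : ω ≠ 1 := by
    have := hprim.ne_one (by norm_num)
    simpa [ω] using this
  have h : (ω - 1) * (ω ^ 2 + ω + 1) = 0 := by linear_combination hω3
  rcases mul_eq_zero.1 h with h | h
  · exact absurd (sub_eq_zero.1 h) hωne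
  · exact h

lemma omega_re : ω.re = -(1 / 2) := by
  rw [ω, show (2 * (Real.pi : ℂ) * Complex.I / 3) = ((2 * Real.pi / 3 : ℝ) : ℂ) * Complex.I by
    push_cast; ring, Complex.exp_ofReal_mul_I_re,
    show (2 * Real.pi / 3 : ℝ) = Real.pi - Real.pi / 3 by ring,
    Real.cos_pi_sub, Real.cos_pi_div_three]

lemma omega_normSq : Complex.normSq ω = 1 := by
  have habs : ‖ω‖ = 1 := by
    rw [ω, show (2 * (Real.pi : ℂ) * Complex.I / 3) = ((2 * Real.pi / 3 : ℝ) : ℂ) * Complex.I by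
      push_cast; ring]
    exact Complex.norm_exp_ofReal_mul_I _
  have h := Complex.sq_norm ω
  rw [habs] at h
  simpa using h.symm

lemma tau_re : τ.re = 3 / 2 := by
  simp [τ, Complex.add_re, omega_re]
  norm_num

lemma tau_normSq : Complex.normSq τ = 3 := by
  have h1 := omega_normSq
  have h2 := omega_re
  simp only [Complex.normSq_apply, τ, Complex.add_re, Complex.add_im] at *
  norm_num at *
  nlinarith [h1, h2]

lemma tau_sq : τ ^ 2 = 3 * τ - 3 := by
  simp only [τ]
  linear_combination omega_quad

lemma tau_six : τ ^ 6 = -27 := by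
  linear_combination (τ ^ 4 + 3 * τ ^ 3 + 6 * τ ^ 2 + 9 * τ + 9) * tau_sq

lemma tau_five : τ ^ 5 = 9 * τ - 27 := by
  linear_combination (τ ^ 3 + 3 * τ ^ 2 + 6 * τ + 9) * tau_sq

lemma tau_seven : τ ^ 7 = -27 * τ := by
  linear_combination τ * tau_six

/-- For `k ≡ ±5 (mod 12)`, one has `|τ^k − 1|² = 1 + 3^k + 3^{(k+1)/2}`. -/
theorem normSq_tau_pow_sub_one_of_five_or_seven (k : ℕ)
    (hmod : k % 12 = 5 ∨ k % 12 = 7) :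
    ‖τ ^ k - 1‖ ^ 2 = 1 + (3 : ℝ) ^ k + (3 : ℝ) ^ ((k + 1) / 2) := by
  have hns : Complex.normSq (τ ^ k) = 3 ^ k := by
    rw [map_pow, tau_normSq]
  have hre : (τ ^ k).re = -(3 : ℝ) ^ ((k + 1) / 2) / 2 := by
    set q := k / 12 with hq
    rcases hmod with h | h
    · have hk : k = 12 * q + 5 := by omega
      have hpow : τ ^ k = ((729 ^ q : ℝ) : ℂ) * (9 * τ - 27) := by
        rw [hk, pow_add, show 12 * q = 6 * (2 * q) by ring, pow_mul, tau_six, tau_five]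
        push_cast
        rw [show ((-27 : ℂ)) ^ (2 * q) = 729 ^ q by rw [pow_mul]; norm_num]
      have hdiv : (k + 1) / 2 = 6 * q + 3 := by omega
      rw [hpow, hdiv, Complex.re_ofReal_mul]
      have : ((9 : ℂ) * τ - 27).re = -27 / 2 := by
        simp [Complex.sub_re, Complex.mul_re, tau_re]
        norm_num [tau_re]
      rw [this]
      rw [show (3 : ℝ) ^ (6 * q + 3) = (3 ^ 6) ^ q * 3 ^ 3 by rw [← pow_mul, ← pow_add]]
      norm_num
      ring
    · have hk : k = 12 * q + 7 := by omega
      have hpow : τ ^ k = ((729 ^ q : ℝ) : ℂ) * (-27 * τ) := by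
        rw [hk, pow_add, show 12 * q = 6 * (2 * q) by ring, pow_mul, tau_six, tau_seven]
        push_cast
        rw [show ((-27 : ℂ)) ^ (2 * q) = 729 ^ q by rw [pow_mul]; norm_num]
      have hdiv : (k + 1) / 2 = 6 * q + 4 := by omega
      rw [hpow, hdiv, Complex.re_ofReal_mul]
      have : ((-27 : ℂ) * τ).re = -81 / 2 := by
        simp [Complex.mul_re, tau_re]
        norm_num [tau_re]
      rw [this]
      rw [show (3 : ℝ) ^ (6 * q + 4) = (3 ^ 6) ^ q * 3 ^ 4 by rw [← pow_mul, ← pow_add]]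
      norm_num
      ring
  rw [Complex.sq_norm, ns_sub_one, hns, hre]
  ring
end

section
/- Let ω = e^{2πi/3} ∈ ℂ and τ = ω + 2. For every natural number k with k ≡ 2 (mod 12) or k ≡ 10 (mod 12), one has |τ^k − 1|² = 1 − 3^{k/2} + 3^k, and for every k with k ≡ 4 (mod 12) or k ≡ 8 (mod 12), one has |τ^k − 1|² = 1 + 3^{k/2} + 3^k. -/
open Complex

lemma tau_eq : τ = (3/2 : ℝ) + (Real.sqrt 3 / 2 : ℝ) * I := by
  have h : (2 * Real.pi * Complex.I / 3) = ((2 * Real.pi / 3 : ℝ) : ℂ) * I := by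
    push_cast; ring
  have hc : Real.cos (2 * Real.pi / 3) = -(1/2) := by
    have : (2 * Real.pi / 3) = Real.pi - Real.pi/3 := by ring
    rw [this, Real.cos_pi_sub, Real.cos_pi_div_three]
  have hs : Real.sin (2 * Real.pi / 3) = Real.sqrt 3 / 2 := by
    have : (2 * Real.pi / 3) = Real.pi - Real.pi/3 := by ring
    rw [this, Real.sin_pi_sub, Real.sin_pi_div_three]
  rw [τ, ω, h, Complex.exp_mul_I]
  rw [← Complex.ofReal_cos, ← Complex.ofReal_sin, hc, hs]
  push_cast
  ring

lemma s_sq : Real.sqrt 3 ^ 2 = 3 := Real.sq_sqrt (by norm_num)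

lemma s_sq_c : ((Real.sqrt 3 : ℝ) : ℂ) ^ 2 = 3 := by norm_cast; exact s_sq

lemma tau2 : τ ^ 2 = ((3/2 : ℝ) : ℂ) + ((3 * Real.sqrt 3 / 2 : ℝ) : ℂ) * I := by
  rw [tau_eq]; push_cast
  linear_combination (I^2/4) * s_sq_c + (3/4) * Complex.I_sq

lemma tau3 : τ ^ 3 = 3 * (Real.sqrt 3 : ℝ) * I := by
  rw [tau_eq, Complex.ext_iff]
  simp [pow_succ, Complex.add_re, Complex.add_im, Complex.mul_re, Complex.mul_im]
  constructor <;> nlinarith [s_sq, Real.sqrt_nonneg 3]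

lemma tau4 : τ ^ 4 = ((-(9/2) : ℝ) : ℂ) + ((9 * Real.sqrt 3 / 2 : ℝ) : ℂ) * I := by
  have h : τ ^ 4 = τ * τ ^ 3 := by ring
  rw [h, tau3, tau_eq]; push_cast
  linear_combination (3*I^2/2) * s_sq_c + (9/2) * Complex.I_sq

lemma tau8 : τ ^ 8 = ((-(81/2) : ℝ) : ℂ) + ((-(81 * Real.sqrt 3 / 2) : ℝ) : ℂ) * I := by
  have h : τ ^ 8 = (τ ^ 4) ^ 2 := by ring
  rw [h, tau4]; push_cast
  linear_combination (81*I^2/4) * s_sq_c + (243/4) * Complex.I_sq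

lemma tau10 : τ ^ 10 = ((243/2 : ℝ) : ℂ) + ((-(243 * Real.sqrt 3 / 2) : ℝ) : ℂ) * I := by
  have h : τ ^ 10 = τ ^ 8 * τ ^ 2 := by ring
  rw [h, tau8, tau2]; push_cast
  linear_combination (-243*I^2/4) * s_sq_c + (-729/4) * Complex.I_sq

lemma tau12 : τ ^ 12 = 729 := by
  have h : τ ^ 12 = (τ ^ 3) ^ 4 := by ring
  rw [h, tau3]
  linear_combination (81 * ((Real.sqrt 3:ℝ):ℂ)^2 * I^4 + 243 * I^4) * s_sq_c
    + 729 * (I^2 - 1) * Complex.I_sq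

lemma key (q r : ℕ) (a b : ℝ) (h : τ ^ r = (a : ℂ) + (b : ℂ) * I) :
    ‖τ ^ (12*q + r) - 1‖ ^ 2
      = ((729:ℝ)^q * a - 1)^2 + ((729:ℝ)^q * b)^2 := by
  have hp : τ ^ (12*q + r) = (((729:ℝ)^q : ℝ) : ℂ) * ((a : ℂ) + (b : ℂ) * I) := by
    rw [pow_add, pow_mul, tau12, h]; push_cast; ring
  rw [hp, Complex.sq_norm, Complex.normSq_apply]
  simp [Complex.add_re, Complex.add_im, Complex.mul_re, Complex.mul_im,
    Complex.sub_re, Complex.sub_im, ← Complex.ofReal_pow, Complex.ofReal_re, Complex.ofReal_im]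
  ring

lemma p6 (q : ℕ) : (3:ℝ)^(6*q) = 729^q := by rw [pow_mul]; norm_num

lemma p12 (q r : ℕ) : (3:ℝ)^(12*q + r) = ((729:ℝ)^q)^2 * 3^r := by
  rw [pow_add, show 12*q = 6*q*2 by ring, pow_mul, p6]

/-- For `k ≡ 2, 10 (mod 12)`, `|τ^k − 1|² = 1 − 3^{k/2} + 3^k`;
for `k ≡ 4, 8 (mod 12)`, `|τ^k − 1|² = 1 + 3^{k/2} + 3^k`. -/
theorem normSq_tau_pow_sub_one_of_even_cases :
    (∀ k : ℕ, k % 12 = 2 ∨ k % 12 = 10 →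
      ‖τ ^ k - 1‖ ^ 2 = 1 - (3 : ℝ) ^ (k / 2) + (3 : ℝ) ^ k) ∧
    (∀ k : ℕ, k % 12 = 4 ∨ k % 12 = 8 →
      ‖τ ^ k - 1‖ ^ 2 = 1 + (3 : ℝ) ^ (k / 2) + (3 : ℝ) ^ k) := by
  constructor
  · rintro k (h | h)
    · obtain ⟨q, rfl⟩ : ∃ q, k = 12*q + 2 := ⟨k/12, by omega⟩
      rw [key q 2 (3/2) (3 * Real.sqrt 3 / 2) tau2,
        show (12*q+2)/2 = 6*q+1 by omega, pow_add, p6, p12]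
      linear_combination (9 * ((729:ℝ)^q)^2 / 4) * s_sq
    · obtain ⟨q, rfl⟩ : ∃ q, k = 12*q + 10 := ⟨k/12, by omega⟩
      rw [key q 10 (243/2) (-(243 * Real.sqrt 3 / 2)) tau10,
        show (12*q+10)/2 = 6*q+5 by omega, pow_add, p6, p12]
      norm_num
      linear_combination (59049 * ((729:ℝ)^q)^2 / 4) * s_sq
  · rintro k (h | h)
    · obtain ⟨q, rfl⟩ : ∃ q, k = 12*q + 4 := ⟨k/12, by omega⟩
      rw [key q 4 (-(9/2)) (9 * Real.sqrt 3 / 2) tau4,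
        show (12*q+4)/2 = 6*q+2 by omega, pow_add, p6, p12]
      norm_num
      linear_combination (81 * ((729:ℝ)^q)^2 / 4) * s_sq
    · obtain ⟨q, rfl⟩ : ∃ q, k = 12*q + 8 := ⟨k/12, by omega⟩
      rw [key q 8 (-(81/2)) (-(81 * Real.sqrt 3 / 2)) tau8,
        show (12*q+8)/2 = 6*q+4 by omega, pow_add, p6, p12]
      norm_num
      linear_combination (6561 * ((729:ℝ)^q)^2 / 4) * s_sq
end
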